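/- arXiv:2006.15847 — 4 statements merged into one kernel-verified Lean document; each statement's English description precedes it below -/
import Mathlib

section
/- Let Γ be a right-angled Coxeter group with generators S and commuting pairs R, let V be a finite-dimensional real vector space, and ρ: Γ → GL(V) a representation. Then the space of cocycles Z¹_ρ(Γ,V) = {τ: Γ → V | τ(γη) = ρ(γ)τ(η) + τ(γ)} is isomorphic (by restriction to generators) to the vector space of functions τ: S → V such that (id + ρ(s))·τ(s) = 0 for all s ∈ S, and (id − ρ(s₁))·τ(s₂) = (id − ρ(s₂))·τ(s₁) for all (s₁,s₂) ∈ R. -/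
/-- The defining relators of the right-angled Coxeter group on the set `S` with set of
commuting pairs `R`. -/
def racgRels (S : Type*) (R : Set (S × S)) : Set (FreeGroup S) :=
  {w | (∃ a : S, w = FreeGroup.of a * FreeGroup.of a) ∨
       ∃ p ∈ R, w = FreeGroup.of p.1 * FreeGroup.of p.2 *
         (FreeGroup.of p.1)⁻¹ * (FreeGroup.of p.2)⁻¹}

theorem racg_sq {S : Type} {R : Set (S × S)} (a : S) :
    (PresentedGroup.of a * PresentedGroup.of a : PresentedGroup (racgRels S R)) = 1 := by
  have h : (FreeGroup.of a * FreeGroup.of a : FreeGroup S) ∈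
      Subgroup.normalClosure (racgRels S R) :=
    Subgroup.subset_normalClosure (Or.inl ⟨a, rfl⟩)
  exact (QuotientGroup.eq_one_iff _).2 h

theorem racg_comm {S : Type} {R : Set (S × S)} {p : S × S} (hp : p ∈ R) :
    (PresentedGroup.of p.1 * PresentedGroup.of p.2 : PresentedGroup (racgRels S R)) =
      PresentedGroup.of p.2 * PresentedGroup.of p.1 := by
  have h : (FreeGroup.of p.1 * FreeGroup.of p.2 * (FreeGroup.of p.1)⁻¹ * (FreeGroup.of p.2)⁻¹ :
      FreeGroup S) ∈ Subgroup.normalClosure (racgRels S R) :=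
    Subgroup.subset_normalClosure (Or.inr ⟨p, hp, rfl⟩)
  have h2 : (PresentedGroup.of p.1 * PresentedGroup.of p.2 * (PresentedGroup.of p.1)⁻¹ *
      (PresentedGroup.of p.2)⁻¹ : PresentedGroup (racgRels S R)) = 1 := by
    have := (QuotientGroup.eq_one_iff _).2 h
    exact this
  exact mul_inv_eq_one.mp (by rw [mul_inv_rev, ← mul_assoc]; exact h2)

/-- For a representation `ρ` of a right-angled Coxeter group `Γ` on a finite-dimensional real
vector space `V`, the space of cocycles `Z¹_ρ(Γ,V)` is isomorphic, by restriction to the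
generators, to the space of functions `t : S → V` with `(id + ρ(s)) t(s) = 0` for all `s ∈ S`
and `(id − ρ(s₁)) t(s₂) = (id − ρ(s₂)) t(s₁)` for all `(s₁,s₂) ∈ R`: the restriction of every
cocycle satisfies these conditions, and every such `t` extends uniquely to a cocycle. -/
theorem stmt6 {S : Type} (R : Set (S × S)) (hR : ∀ p ∈ R, p.1 ≠ p.2)
    {V : Type} [AddCommGroup V] [Module ℝ V] [FiniteDimensional ℝ V]
    (ρ : PresentedGroup (racgRels S R) →* (V ≃ₗ[ℝ] V)) :
    (∀ τ : PresentedGroup (racgRels S R) → V,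
      (∀ γ η, τ (γ * η) = ρ γ (τ η) + τ γ) →
      ((∀ a : S, τ (PresentedGroup.of a) +
          ρ (PresentedGroup.of a) (τ (PresentedGroup.of a)) = 0) ∧
       ∀ p ∈ R,
         τ (PresentedGroup.of p.2) - ρ (PresentedGroup.of p.1) (τ (PresentedGroup.of p.2)) =
         τ (PresentedGroup.of p.1) - ρ (PresentedGroup.of p.2) (τ (PresentedGroup.of p.1)))) ∧
    (∀ t : S → V,
      ((∀ a : S, t a + ρ (PresentedGroup.of a) (t a) = 0) ∧
       ∀ p ∈ R,
         t p.2 - ρ (PresentedGroup.of p.1) (t p.2) =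
         t p.1 - ρ (PresentedGroup.of p.2) (t p.1)) →
      ∃! τ : PresentedGroup (racgRels S R) → V,
        (∀ γ η, τ (γ * η) = ρ γ (τ η) + τ γ) ∧
        ∀ a : S, τ (PresentedGroup.of a) = t a) := by
  constructor
  · -- restriction of a cocycle satisfies the conditions
    intro τ hτ
    have hone : τ 1 = 0 := by
      have := hτ 1 1
      simpa using this
    constructor
    · intro a
      have h := hτ (PresentedGroup.of a) (PresentedGroup.of a)
      rw [racg_sq a, hone] at h
      rw [add_comm]
      exact h.symm
    · intro p hp
      have h1 := hτ (PresentedGroup.of p.1) (PresentedGroup.of p.2)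
      have h2 := hτ (PresentedGroup.of p.2) (PresentedGroup.of p.1)
      rw [racg_comm hp] at h1
      rw [h2] at h1
      rw [sub_eq_sub_iff_add_eq_add, add_comm (τ (PresentedGroup.of p.2)),
        add_comm (τ (PresentedGroup.of p.1))]
      exact h1
  · -- extension
    intro t ⟨h1, h2⟩
    -- auxiliary facts
    have hsq : ∀ a : S, ρ (PresentedGroup.of a) * ρ (PresentedGroup.of a) = 1 := by
      intro a; rw [← map_mul, racg_sq a, map_one]
    have hcm : ∀ p ∈ R, ρ (PresentedGroup.of p.1) * ρ (PresentedGroup.of p.2) =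
        ρ (PresentedGroup.of p.2) * ρ (PresentedGroup.of p.1) := by
      intro p hp; rw [← map_mul, ← map_mul, racg_comm hp]
    -- the affine maps x ↦ t a + ρ(a) x
    set f : S → (V ≃ᵃ[ℝ] V) := fun a =>
      ((ρ (PresentedGroup.of a)).toAffineEquiv.trans (AffineEquiv.constVAdd ℝ V (t a))) with hf
    have hfapp : ∀ a x, f a x = t a + ρ (PresentedGroup.of a) x := by
      intro a x; rfl
    have hrels : ∀ r ∈ racgRels S R, FreeGroup.lift f r = 1 := by
      rintro r (⟨a, rfl⟩ | ⟨p, hp, rfl⟩)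
      · ext x
        simp only [map_mul, FreeGroup.lift_apply_of, AffineEquiv.coe_mul, Function.comp_apply,
          AffineEquiv.coe_one, id_eq, hfapp]
        have hx : ρ (PresentedGroup.of a) (ρ (PresentedGroup.of a) x) = x := by
          have := congrArg (fun e => (e : V ≃ₗ[ℝ] V) x) (hsq a)
          simpa using this
        have ht : ρ (PresentedGroup.of a) (t a) = -(t a) :=
          eq_neg_of_add_eq_zero_right (h1 a)
        rw [map_add, hx, ht]
        abel
      · ext x
        simp only [map_mul, map_inv, FreeGroup.lift_apply_of, AffineEquiv.coe_mul,
          Function.comp_apply, AffineEquiv.coe_one, id_eq]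
        -- reduce the inverse form to commutation: f p.1 ∘ f p.2 = f p.2 ∘ f p.1
        have key : ∀ y, f p.1 (f p.2 y) = f p.2 (f p.1 y) := by
          intro y
          simp only [hfapp, map_add]
          have hc : ρ (PresentedGroup.of p.1) (ρ (PresentedGroup.of p.2) y) =
              ρ (PresentedGroup.of p.2) (ρ (PresentedGroup.of p.1) y) := by
            have := congrArg (fun e => (e : V ≃ₗ[ℝ] V) y) (hcm p hp)
            simpa using this
          have hts := h2 p hp
          rw [sub_eq_sub_iff_add_eq_add] at hts
          rw [hc, ← add_assoc, ← add_assoc, hts.symm]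
        have : f p.1 ((f p.2) ((f p.1)⁻¹ ((f p.2)⁻¹ x))) = x := by
          rw [key]
          show (f p.2) ((f p.1) ((f p.1).symm ((f p.2).symm x))) = x
          rw [AffineEquiv.apply_symm_apply, AffineEquiv.apply_symm_apply]
        exact this
    set F : PresentedGroup (racgRels S R) →* (V ≃ᵃ[ℝ] V) := PresentedGroup.toGroup hrels with hF
    have hFof : ∀ a : S, F (PresentedGroup.of a) = f a := fun a => PresentedGroup.toGroup.of hrels
    -- the linear part of F is ρ
    have hlin : ∀ γ, (F γ).linear = (ρ γ : V ≃ₗ[ℝ] V) := by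
      have : (AffineEquiv.linearHom).comp F = ρ := by
        ext a
        simp only [MonoidHom.comp_apply, hFof, AffineEquiv.linearHom_apply, hf]
        rfl
      intro γ
      exact congrArg (fun g => g γ) this
    set τ : PresentedGroup (racgRels S R) → V := fun γ => F γ 0 with hτdef
    have happ : ∀ γ x, F γ x = ρ γ x + τ γ := by
      intro γ x
      have h0 : F γ x = (F γ).linear x + F γ 0 := by
        have := (F γ).toAffineMap.map_vadd (0 : V) x
        simpa [vadd_eq_add] using this
      rw [h0, hlin γ]
    have hcoc : ∀ γ η, τ (γ * η) = ρ γ (τ η) + τ γ := by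
      intro γ η
      show F (γ * η) 0 = ρ γ (F η 0) + F γ 0
      rw [map_mul]
      show F γ (F η 0) = _
      rw [happ γ (F η 0)]
    have hgen : ∀ a : S, τ (PresentedGroup.of a) = t a := by
      intro a
      show F (PresentedGroup.of a) 0 = t a
      rw [hFof a, hfapp a 0, map_zero, add_zero]
    refine ⟨τ, ⟨hcoc, hgen⟩, ?_⟩
    -- uniqueness
    rintro τ' ⟨hcoc', hgen'⟩
    have hone : ∀ (σ : PresentedGroup (racgRels S R) → V),
        (∀ γ η, σ (γ * η) = ρ γ (σ η) + σ γ) → σ 1 = 0 := by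
      intro σ hσ
      have := hσ 1 1
      simp at this
      exact this
    have hinv : ∀ (σ : PresentedGroup (racgRels S R) → V),
        (∀ γ η, σ (γ * η) = ρ γ (σ η) + σ γ) →
        ∀ γ, σ γ⁻¹ = -(ρ γ⁻¹ (σ γ)) := by
      intro σ hσ γ
      have := hσ γ⁻¹ γ
      rw [inv_mul_cancel, hone σ hσ] at this
      exact eq_neg_of_add_eq_zero_right this.symm
    funext γ
    have : γ ∈ Subgroup.closure (Set.range (PresentedGroup.of :
        S → PresentedGroup (racgRels S R))) := by
      rw [PresentedGroup.closure_range_of]; trivial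
    refine Subgroup.closure_induction ?_ ?_ ?_ ?_ this
    · rintro x ⟨a, rfl⟩
      rw [hgen' a, hgen a]
    · rw [hone τ' hcoc', hone τ hcoc]
    · intro x y _ _ hx hy
      rw [hcoc' x y, hcoc x y, hx, hy]
    · intro x _ hx
      rw [hinv τ' hcoc' x, hinv τ hcoc x, hx]
end

section
/- Let p, q ∈ ℝ^{1,n-1} be two points of Minkowski space. The sets S_p, S_q of spacelike affine hyperplanes through p and through q respectively satisfy: S_p ∩ S_q ≠ ∅ if and only if p − q is spacelike (⟨p−q, p−q⟩ > 0) or p = q. -/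
open scoped BigOperators

/-- The Minkowski bilinear form of signature `(1,n-1)` on `ℝ^{1,n-1} = ℝⁿ`. -/
noncomputable def mink (n : ℕ) (x y : Fin n → ℝ) : ℝ :=
  ∑ i : Fin n, (if (i : ℕ) = 0 then (-1 : ℝ) else 1) * x i * y i

/-- A spacelike affine hyperplane of Minkowski space: an affine hyperplane whose normal
vector `T` is timelike. -/
def SpacelikeHyp (n : ℕ) (H : Set (Fin n → ℝ)) : Prop :=
  ∃ T x₀ : Fin n → ℝ, mink n T T < 0 ∧ H = {x | mink n (x - x₀) T = 0}

lemma mink_comm (n : ℕ) (x y : Fin n → ℝ) : mink n x y = mink n y x := by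
  unfold mink; apply Finset.sum_congr rfl; intros; ring

lemma mink_zero_left (n : ℕ) (y : Fin n → ℝ) : mink n 0 y = 0 := by
  simp [mink]

lemma mink_sub_left (n : ℕ) (x y T : Fin n → ℝ) :
    mink n (x - y) T = mink n x T - mink n y T := by
  unfold mink
  rw [← Finset.sum_sub_distrib]
  apply Finset.sum_congr rfl; intros; simp only [Pi.sub_apply]; ring

lemma mink_add_left (n : ℕ) (x y T : Fin n → ℝ) :
    mink n (x + y) T = mink n x T + mink n y T := by
  unfold mink
  rw [← Finset.sum_add_distrib]
  apply Finset.sum_congr rfl; intros; simp only [Pi.add_apply]; ring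

lemma mink_smul_left (n : ℕ) (c : ℝ) (x T : Fin n → ℝ) :
    mink n (c • x) T = c * mink n x T := by
  unfold mink
  rw [Finset.mul_sum]
  apply Finset.sum_congr rfl; intros; simp only [Pi.smul_apply, smul_eq_mul]; ring

lemma mink_split (n : ℕ) (hn : 1 ≤ n) (x y : Fin n → ℝ) :
    mink n x y = -(x ⟨0, hn⟩ * y ⟨0, hn⟩) +
      ∑ i ∈ Finset.univ.erase (⟨0, hn⟩ : Fin n), x i * y i := by
  unfold mink
  rw [← Finset.add_sum_erase _ _ (Finset.mem_univ (⟨0, hn⟩ : Fin n))]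
  congr 1
  · simp
  · apply Finset.sum_congr rfl
    intro i hi
    have hi' : i ≠ (⟨0, hn⟩ : Fin n) := (Finset.mem_erase.mp hi).1
    have : (i : ℕ) ≠ 0 := fun h => hi' (Fin.ext h)
    rw [if_neg this]; ring

/-- Orthogonal complement of a timelike vector is positive definite. -/
lemma key (n : ℕ) (hn : 1 ≤ n) (T v : Fin n → ℝ) (hT : mink n T T < 0)
    (hv : mink n v T = 0) : 0 < mink n v v ∨ v = 0 := by
  set z : Fin n := ⟨0, hn⟩ with hz
  set E := Finset.univ.erase z with hE
  set a := T z
  set b := v z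
  set A := ∑ i ∈ E, T i ^ 2 with hA
  set B := ∑ i ∈ E, v i ^ 2 with hB
  set C := ∑ i ∈ E, v i * T i with hC
  have hTT : mink n T T = -(a * a) + A := by
    rw [mink_split n hn]; congr 1
    apply Finset.sum_congr rfl; intros; ring
  have hvv : mink n v v = -(b * b) + B := by
    rw [mink_split n hn]; congr 1
    apply Finset.sum_congr rfl; intros; ring
  have hvT : mink n v T = -(b * a) + C := by rw [mink_split n hn]
  have hCS : C ^ 2 ≤ B * A := Finset.sum_mul_sq_le_sq_mul_sq E v T
  have hA0 : 0 ≤ A := Finset.sum_nonneg fun i _ => sq_nonneg _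
  have hB0 : 0 ≤ B := Finset.sum_nonneg fun i _ => sq_nonneg _
  rw [hTT] at hT
  rw [hvT] at hv
  have ha2 : 0 < a * a := by nlinarith
  have hC' : C = b * a := by linarith
  have hAa : A ≤ a * a := by linarith
  have key1 : b * b * (a * a) ≤ B * (a * a) := by
    calc b * b * (a * a) = C ^ 2 := by rw [hC']; ring
      _ ≤ B * A := hCS
      _ ≤ B * (a * a) := mul_le_mul_of_nonneg_left hAa hB0
  have hbB : b * b ≤ B := le_of_mul_le_mul_right key1 ha2
  rcases lt_or_eq_of_le (by rw [hvv]; linarith : (0:ℝ) ≤ mink n v v) with h | h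
  · exact Or.inl h
  · right
    have hBb : B = b * b := by rw [hvv] at h; linarith
    have hb0 : b = 0 := by
      by_contra hb
      have hb2 : 0 < b * b := mul_self_pos.mpr hb
      have key2 : b * b * (a * a) ≤ b * b * A := by
        calc b * b * (a * a) = C ^ 2 := by rw [hC']; ring
          _ ≤ B * A := hCS
          _ = b * b * A := by rw [hBb]
      have : a * a ≤ A := le_of_mul_le_mul_left key2 hb2
      linarith
    have hB00 : B = 0 := by rw [hBb, hb0]; ring
    have hall : ∀ i ∈ E, v i ^ 2 = 0 :=
      (Finset.sum_eq_zero_iff_of_nonneg fun i _ => sq_nonneg (v i)).mp hB00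
    funext i
    rcases eq_or_ne i z with rfl | hiz
    · exact hb0
    · have := hall i (Finset.mem_erase.mpr ⟨hiz, Finset.mem_univ i⟩)
      exact pow_eq_zero_iff (by norm_num) |>.mp this

/-- Two points `p`, `q` of Minkowski space lie on a common spacelike affine hyperplane iff
`p − q` is spacelike or `p = q`. -/
theorem stmt10 (n : ℕ) (hn : 1 ≤ n) (p q : Fin n → ℝ) :
    (∃ H : Set (Fin n → ℝ), SpacelikeHyp n H ∧ p ∈ H ∧ q ∈ H) ↔
      (0 < mink n (p - q) (p - q) ∨ p = q) := by
  constructor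
  · rintro ⟨H, ⟨T, x₀, hT, rfl⟩, hp, hq⟩
    have hpq : mink n (p - q) T = 0 := by
      have : mink n ((p - x₀) - (q - x₀)) T = 0 := by
        rw [mink_sub_left, hp, hq]; ring
      simpa using this
    rcases key n hn T (p - q) hT hpq with h | h
    · exact Or.inl h
    · exact Or.inr (by rwa [sub_eq_zero] at h)
  · intro h
    set e₀ : Fin n → ℝ := fun i => if (i : ℕ) = 0 then 1 else 0 with he₀
    have he : mink n e₀ e₀ = -1 := by
      unfold mink
      rw [Finset.sum_eq_single (⟨0, hn⟩ : Fin n)]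
      · simp [he₀]
      · intro i _ hi
        have : (i : ℕ) ≠ 0 := fun h' => hi (Fin.ext h')
        simp [he₀, this]
      · simp
    rcases h with h | rfl
    · set v := p - q with hv
      set s := mink n v v with hs
      set m := mink n v e₀ with hm
      set T := s • e₀ - m • v with hTdef
      have hvT : mink n v T = 0 := by
        rw [hTdef]
        rw [mink_comm, mink_sub_left, mink_smul_left, mink_smul_left,
          mink_comm n e₀ v, mink_comm n v v]
        ring_nf
        rw [← hm, ← hs]; ring
      have hTT : mink n T T < 0 := by
        have expand : mink n T T = s * s * mink n e₀ e₀ - s * m * mink n e₀ v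
            - m * s * mink n v e₀ + m * m * mink n v v := by
          rw [hTdef, mink_sub_left, mink_smul_left, mink_smul_left,
            mink_comm n e₀ (s • e₀ - m • v), mink_comm n v (s • e₀ - m • v),
            mink_sub_left, mink_sub_left, mink_smul_left, mink_smul_left,
            mink_smul_left, mink_smul_left]
          ring
        rw [expand, he, mink_comm n e₀ v, ← hm, ← hs]
        nlinarith
      refine ⟨{x | mink n (x - p) T = 0}, ⟨T, p, hTT, rfl⟩, ?_, ?_⟩
      · show mink n (p - p) T = 0
        simp [mink_zero_left]
      · show mink n (q - p) T = 0
        have : q - p = 0 - v := by rw [hv]; abel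
        rw [this, mink_sub_left, mink_zero_left, hvT]; ring
    · refine ⟨{x | mink n (x - p) e₀ = 0}, ⟨e₀, p, by rw [he]; norm_num, rfl⟩, ?_, ?_⟩ <;>
        · show mink n (p - p) e₀ = 0
          simp [mink_zero_left]
end

section
/- Let ρ: Γ → O(b) be a representation into the orthogonal group of a nondegenerate symmetric bilinear form b on ℝ^m. Suppose s, t ∈ Γ commute, ρ(s) = −id, and ρ(t) = r_v is the reflection in v^⊥ with b(v,v) = 1. Then for any cocycle τ ∈ Z¹_ρ(Γ, ℝ^m) one has b(τ(s) − τ(t), v) = 0, i.e. τ(s) − τ(t) ∈ v^⊥. -/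
/-- Let `ρ : Γ → O(b)` be a representation into the orthogonal group of a nondegenerate
symmetric bilinear form `b` on `ℝ^m`.  Suppose `s, t ∈ Γ` commute, `t² = 1`,
`ρ(s) = −id`, and `ρ(t) = r_v` is the reflection in `v^⊥` for a unit vector `v`.  Then
every cocycle `τ ∈ Z¹_ρ(Γ, ℝ^m)` satisfies `b(τ(s) − τ(t), v) = 0`, i.e.
`τ(s) − τ(t) ∈ v^⊥`. -/
theorem stmt16 (m : ℕ) {Γ : Type} [Group Γ]
    (B : (Fin m → ℝ) →ₗ[ℝ] (Fin m → ℝ) →ₗ[ℝ] ℝ)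
    (hsymm : ∀ x y, B x y = B y x)
    (hnd : ∀ x, (∀ y, B x y = 0) → x = 0)
    (ρ : Γ →* ((Fin m → ℝ) ≃ₗ[ℝ] (Fin m → ℝ)))
    (hρ : ∀ γ x y, B (ρ γ x) (ρ γ y) = B x y)
    (s t : Γ) (hcomm : s * t = t * s) (ht : t * t = 1)
    (v : Fin m → ℝ) (hv : B v v = 1)
    (hρs : ∀ w, ρ s w = -w)
    (hρt : ∀ w, ρ t w = w - (2 * B w v) • v)
    (τ : Γ → Fin m → ℝ)
    (hτ : ∀ γ η, τ (γ * η) = ρ γ (τ η) + τ γ) :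
    B (τ s - τ t) v = 0 := by
  have h1 : ρ s (τ t) + τ s = ρ t (τ s) + τ t := by
    rw [← hτ, ← hτ, hcomm]
  rw [hρs, hρt] at h1
  have h2 := congrArg (fun w => B w v) h1
  simp [hv] at h2
  rw [map_sub]
  simp only [LinearMap.sub_apply]
  linarith
end

section
/- Let q₀(x) = −x₀² + x₁² + ... + x_{n-1}² be the degenerate quadratic form on ℝ^{n+1} (not involving x_n), and let G_HP = {[A] ∈ PO(q₀) : A·e_n = ±e_n}. Then G_HP is isomorphic as a group to O(1,n-1) ⋉ ℝ^n, via the map sending (Â, v) ∈ O(1,n-1) ⋉ ℝ^n to the projective class of the block matrix with upper-left n×n block Â, last column (0,...,0,1)^T, and last row (vᵀJÂ related entries, 1) — concretely, the matrix A with A_{ij} = Â_{ij} for i,j < n, A_{in} = 0 for i < n, A_{nn} = 1, and A_{nj} = (J v)ᵀ Â entries in the bottom row, where J = diag(−1,1,...,1). -/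
open scoped BigOperators

/-- `Â ∈ O(1,n-1)`: the matrix `Â` preserves the Minkowski form. -/
def InMinkO (n : ℕ) (A : Matrix (Fin n) (Fin n) ℝ) : Prop :=
  ∀ x y : Fin n → ℝ, mink n (A.mulVec x) (A.mulVec y) = mink n x y

/-- The degenerate quadratic form `q₀(x) = −x₀² + x₁² + ⋯ + x_{n-1}²` on `ℝ^{n+1}`
(not involving the last coordinate `xₙ`). -/
noncomputable def q0 (n : ℕ) (x : Fin (n + 1) → ℝ) : ℝ :=
  ∑ i : Fin (n + 1),
    (if i = Fin.last n then (0 : ℝ) else if (i : ℕ) = 0 then -1 else 1) * x i * x i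

/-- The distinguished vector `eₙ` of `ℝ^{n+1}`. -/
noncomputable def eLast (n : ℕ) : Fin (n + 1) → ℝ := Pi.single (Fin.last n) 1

/-- The half-pipe duality map `φ : O(1,n-1) ⋉ ℝⁿ → M_{n+1}(ℝ)`, sending `(Â, v)` to the
block matrix with upper-left `n×n` block `Â`, last column `(0,…,0,1)ᵀ`, and bottom row
`((Jv)ᵀÂ, 1)` with `J = diag(−1,1,…,1)`. -/
noncomputable def phiHP (n : ℕ) (A : Matrix (Fin n) (Fin n) ℝ) (v : Fin n → ℝ) :
    Matrix (Fin (n + 1)) (Fin (n + 1)) ℝ :=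
  Matrix.of fun i j =>
    if hi : (i : ℕ) < n then
      if hj : (j : ℕ) < n then A ⟨i, hi⟩ ⟨j, hj⟩ else 0
    else
      if hj : (j : ℕ) < n then
        ∑ k : Fin n, ((if (k : ℕ) = 0 then (-1 : ℝ) else 1) * v k) * A k ⟨j, hj⟩
      else 1

namespace HPAux

noncomputable def eps (n : ℕ) (i : Fin n) : ℝ := if (i : ℕ) = 0 then -1 else 1

lemma eps_sq (n : ℕ) (i : Fin n) : eps n i * eps n i = 1 := by
  unfold eps; split <;> norm_num

lemma eps_ne (n : ℕ) (i : Fin n) : eps n i ≠ 0 := by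
  unfold eps; split <;> norm_num

lemma mink_def (n : ℕ) (x y : Fin n → ℝ) :
    mink n x y = ∑ i : Fin n, eps n i * x i * y i := rfl

lemma mink_symm (n : ℕ) (x y : Fin n → ℝ) : mink n x y = mink n y x := by
  simp only [mink]
  exact Finset.sum_congr rfl fun i _ => by ring

lemma mink_single (n : ℕ) (x : Fin n → ℝ) (i : Fin n) :
    mink n x (Pi.single i 1) = eps n i * x i := by
  simp only [mink_def, Pi.single_apply, mul_ite, mul_one, mul_zero]
  rw [Finset.sum_ite_eq' Finset.univ i (fun j => eps n j * x j)]
  simp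

lemma mink_zero_left (n : ℕ) (y : Fin n → ℝ) : mink n 0 y = 0 := by
  simp [mink]

lemma mink_nondeg (n : ℕ) (x : Fin n → ℝ) (h : ∀ y, mink n x y = 0) : x = 0 := by
  funext i
  have := h (Pi.single i 1)
  rw [mink_single] at this
  have := mul_eq_zero.1 this
  rcases this with h' | h'
  · exact absurd h' (eps_ne n i)
  · simpa using h'

lemma mink_add_add (n : ℕ) (x y : Fin n → ℝ) :
    mink n (x + y) (x + y) = mink n x x + mink n x y + mink n y x + mink n y y := by
  simp only [mink_def, Pi.add_apply]
  rw [← Finset.sum_add_distrib, ← Finset.sum_add_distrib, ← Finset.sum_add_distrib]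
  exact Finset.sum_congr rfl fun i _ => by ring

lemma mink_smul_smul (n : ℕ) (c : ℝ) (x y : Fin n → ℝ) :
    mink n (c • x) (c • y) = c * c * mink n x y := by
  simp only [mink_def, Pi.smul_apply, smul_eq_mul, Finset.mul_sum]
  exact Finset.sum_congr rfl fun i _ => by ring

lemma inMinkO_of_quad (n : ℕ) (B : Matrix (Fin n) (Fin n) ℝ)
    (h : ∀ x, mink n (B.mulVec x) (B.mulVec x) = mink n x x) : InMinkO n B := by
  intro x y
  have h1 := h (x + y)
  rw [Matrix.mulVec_add, mink_add_add, mink_add_add, h x, h y] at h1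
  have s1 := mink_symm n (B.mulVec x) (B.mulVec y)
  have s2 := mink_symm n x y
  linarith

lemma det_ne (n : ℕ) (A : Matrix (Fin n) (Fin n) ℝ) (hA : InMinkO n A) : A.det ≠ 0 := by
  intro h
  obtain ⟨v, hv, hAv⟩ := (Matrix.exists_mulVec_eq_zero_iff).2 h
  apply hv
  apply mink_nondeg n v
  intro y
  -- choose z with A z = ?: use InMinkO directly
  have := hA v y
  rw [hAv, mink_zero_left] at this
  -- this : 0 = mink v y
  exact this.symm

lemma phi_cc (n : ℕ) (A : Matrix (Fin n) (Fin n) ℝ) (v : Fin n → ℝ) (i j : Fin n) :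
    phiHP n A v i.castSucc j.castSucc = A i j := by
  simp [phiHP, i.isLt, j.isLt]

lemma phi_cl (n : ℕ) (A : Matrix (Fin n) (Fin n) ℝ) (v : Fin n → ℝ) (i : Fin n) :
    phiHP n A v i.castSucc (Fin.last n) = 0 := by
  simp [phiHP, i.isLt]

lemma phi_lc (n : ℕ) (A : Matrix (Fin n) (Fin n) ℝ) (v : Fin n → ℝ) (j : Fin n) :
    phiHP n A v (Fin.last n) j.castSucc = ∑ k : Fin n, eps n k * v k * A k j := by
  simp [phiHP, eps, j.isLt]

lemma phi_ll (n : ℕ) (A : Matrix (Fin n) (Fin n) ℝ) (v : Fin n → ℝ) :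
    phiHP n A v (Fin.last n) (Fin.last n) = 1 := by
  simp [phiHP]

lemma q0_eq (n : ℕ) (x : Fin (n + 1) → ℝ) :
    q0 n x = mink n (fun i => x i.castSucc) (fun i => x i.castSucc) := by
  rw [q0, Fin.sum_univ_castSucc, mink_def]
  have hl : (if Fin.last n = Fin.last n then (0:ℝ) else
      if ((Fin.last n : Fin (n+1)) : ℕ) = 0 then -1 else 1) = 0 := by simp
  rw [hl, zero_mul, zero_mul, add_zero]
  refine Finset.sum_congr rfl fun i _ => ?_
  rw [if_neg (Fin.castSucc_lt_last i).ne]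
  rfl

lemma phi_mulVec_cast (n : ℕ) (A : Matrix (Fin n) (Fin n) ℝ) (v : Fin n → ℝ)
    (x : Fin (n + 1) → ℝ) (i : Fin n) :
    (phiHP n A v).mulVec x i.castSucc = A.mulVec (fun j => x j.castSucc) i := by
  simp only [Matrix.mulVec, dotProduct]
  rw [Fin.sum_univ_castSucc]
  simp [phi_cc, phi_cl]

lemma mulVec_eLast (n : ℕ) (M : Matrix (Fin (n + 1)) (Fin (n + 1)) ℝ) :
    M.mulVec (eLast n) = fun i => M i (Fin.last n) := by
  funext i
  simp only [Matrix.mulVec, dotProduct, eLast, Pi.single_apply, mul_ite, mul_one,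
    mul_zero]
  rw [Finset.sum_ite_eq' Finset.univ (Fin.last n) (fun j => M i j)]
  simp

lemma phi_mul (n : ℕ) (A B : Matrix (Fin n) (Fin n) ℝ) (v w : Fin n → ℝ)
    (hA : InMinkO n A) :
    phiHP n A v * phiHP n B w = phiHP n (A * B) (A.mulVec w + v) := by
  ext i j
  rw [Matrix.mul_apply, Fin.sum_univ_castSucc]
  induction i using Fin.lastCases with
  | last =>
    induction j using Fin.lastCases with
    | last => simp [phi_cl, phi_ll]
    | cast j =>
      simp only [phi_lc, phi_cc, phi_ll, one_mul]
      have hw : ∑ m : Fin n, eps n m * w m * B m j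
          = ∑ k : Fin n, eps n k * (A.mulVec w) k * (A * B) k j := by
        have h := hA w (fun m => B m j)
        rw [mink_def, mink_def] at h
        rw [← h]
        refine Finset.sum_congr rfl fun k _ => ?_
        congr 1
      have hv : ∑ k : Fin n, (∑ m : Fin n, eps n m * v m * A m k) * B k j
          = ∑ k : Fin n, eps n k * v k * (A * B) k j := by
        simp only [Matrix.mul_apply, Finset.sum_mul, Finset.mul_sum]
        rw [Finset.sum_comm]
        exact Finset.sum_congr rfl fun k _ => Finset.sum_congr rfl fun m _ => by ring
      rw [hw, hv, ← Finset.sum_add_distrib]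
      refine Finset.sum_congr rfl fun k _ => ?_
      simp only [Pi.add_apply]
      ring
  | cast i =>
    induction j using Fin.lastCases with
    | last => simp [phi_cc, phi_cl, phi_ll]
    | cast j => simp [phi_cc, phi_cl, phi_lc, Matrix.mul_apply]

lemma phi_one (n : ℕ) : phiHP n 1 0 = 1 := by
  ext i j
  induction i using Fin.lastCases with
  | last =>
    induction j using Fin.lastCases with
    | last => simp [phi_ll, Matrix.one_apply]
    | cast j => simp [phi_lc, Matrix.one_apply, (Fin.castSucc_lt_last j).ne']
  | cast i =>
    induction j using Fin.lastCases with
    | last => simp [phi_cl, Matrix.one_apply, (Fin.castSucc_lt_last i).ne]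
    | cast j => simp [phi_cc, Matrix.one_apply, Fin.castSucc_inj]

lemma phi_isUnit (n : ℕ) (A : Matrix (Fin n) (Fin n) ℝ) (v : Fin n → ℝ)
    (hA : InMinkO n A) : IsUnit (phiHP n A v) := by
  have hdet : IsUnit A.det := isUnit_iff_ne_zero.2 (det_ne n A hA)
  have h := phi_mul n A A⁻¹ v (-(A⁻¹.mulVec v)) hA
  have h2 : A.mulVec (-(A⁻¹.mulVec v)) + v = 0 := by
    rw [Matrix.mulVec_neg, Matrix.mulVec_mulVec, Matrix.mul_nonsing_inv A hdet,
      Matrix.one_mulVec]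
    simp
  rw [Matrix.mul_nonsing_inv A hdet, h2, phi_one] at h
  exact (Matrix.isUnit_iff_isUnit_det _).2 (Matrix.isUnit_det_of_right_inverse h)

lemma phi_q0 (n : ℕ) (A : Matrix (Fin n) (Fin n) ℝ) (v : Fin n → ℝ)
    (hA : InMinkO n A) (x : Fin (n+1) → ℝ) :
    q0 n ((phiHP n A v).mulVec x) = q0 n x := by
  rw [q0_eq, q0_eq]
  have hfun : (fun i : Fin n => (phiHP n A v).mulVec x i.castSucc)
      = A.mulVec (fun j => x j.castSucc) := funext fun i => phi_mulVec_cast n A v x i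
  rw [hfun]
  exact hA _ _

lemma phi_eLast (n : ℕ) (A : Matrix (Fin n) (Fin n) ℝ) (v : Fin n → ℝ) :
    (phiHP n A v).mulVec (eLast n) = eLast n := by
  rw [mulVec_eLast]
  funext i
  induction i using Fin.lastCases with
  | last => simp [phi_ll, eLast]
  | cast i => simp [phi_cl, eLast, Pi.single_apply, (Fin.castSucc_lt_last i).ne]

end HPAux

/-- The group `G_{HP^n} = {[A] ∈ PO(q₀) : A eₙ = ± eₙ}` of half-pipe transformations is
isomorphic to `O(1,n-1) ⋉ ℝⁿ` via the block-matrix map `φ`:  `φ` lands in `G_{HP^n}`, is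
multiplicative for the semidirect-product multiplication `(Â,v)(B̂,w) = (ÂB̂, Âw + v)`,
sends the identity to the identity, is injective up to projective rescaling, and every
invertible matrix preserving `q₀` with `M eₙ = ± eₙ` is a scalar multiple of some
`φ(Â,v)`. -/


theorem stmt19 (n : ℕ) (hn : 1 ≤ n) :
    (∀ (A : Matrix (Fin n) (Fin n) ℝ) (v : Fin n → ℝ), InMinkO n A →
      (IsUnit (phiHP n A v) ∧
       (∀ x, q0 n ((phiHP n A v).mulVec x) = q0 n x) ∧
       (phiHP n A v).mulVec (eLast n) = eLast n)) ∧
    (phiHP n 1 0 = 1) ∧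
    (∀ (A B : Matrix (Fin n) (Fin n) ℝ) (v w : Fin n → ℝ), InMinkO n A → InMinkO n B →
      phiHP n A v * phiHP n B w = phiHP n (A * B) (A.mulVec w + v)) ∧
    (∀ (A B : Matrix (Fin n) (Fin n) ℝ) (v w : Fin n → ℝ) (c : ℝ),
      InMinkO n A → InMinkO n B → phiHP n A v = c • phiHP n B w → A = B ∧ v = w) ∧
    (∀ M : Matrix (Fin (n + 1)) (Fin (n + 1)) ℝ, IsUnit M →
      (∀ x, q0 n (M.mulVec x) = q0 n x) →
      (M.mulVec (eLast n) = eLast n ∨ M.mulVec (eLast n) = -eLast n) →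
      ∃ (A : Matrix (Fin n) (Fin n) ℝ) (v : Fin n → ℝ) (c : ℝ),
        c ≠ 0 ∧ InMinkO n A ∧ M = c • phiHP n A v) := by
  refine ⟨fun A v hA => ⟨HPAux.phi_isUnit n A v hA, fun x => HPAux.phi_q0 n A v hA x,
      HPAux.phi_eLast n A v⟩,
    HPAux.phi_one n,
    fun A B v w hA _ => HPAux.phi_mul n A B v w hA, ?_, ?_⟩
  · -- injectivity up to scale
    intro A B v w c hA hB heq
    have hc1 : c = 1 := by
      have h := congrFun (congrFun heq (Fin.last n)) (Fin.last n)
      rw [HPAux.phi_ll, Matrix.smul_apply, HPAux.phi_ll, smul_eq_mul, mul_one] at h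
      exact h.symm
    subst hc1
    rw [one_smul] at heq
    have hAB : A = B := by
      ext i j
      have h := congrFun (congrFun heq i.castSucc) j.castSucc
      rwa [HPAux.phi_cc, HPAux.phi_cc] at h
    refine ⟨hAB, ?_⟩
    subst hAB
    have hdet : IsUnit A.det := isUnit_iff_ne_zero.2 (HPAux.det_ne n A hA)
    have hrow : Matrix.vecMul (fun k => HPAux.eps n k * (v k - w k)) A = 0 := by
      funext j
      have h := congrFun (congrFun heq (Fin.last n)) j.castSucc
      rw [HPAux.phi_lc, HPAux.phi_lc] at h
      have h2 : ∑ k : Fin n, (HPAux.eps n k * (v k - w k)) * A k j = 0 := by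
        have h3 := sub_eq_zero.2 h
        rw [← Finset.sum_sub_distrib] at h3
        rw [← h3]
        exact Finset.sum_congr rfl fun k _ => by ring
      simpa [Matrix.vecMul, dotProduct] using h2
    have hu0 : (fun k => HPAux.eps n k * (v k - w k)) = (0 : Fin n → ℝ) := by
      have h1 := Matrix.vecMul_vecMul (fun k => HPAux.eps n k * (v k - w k)) A A⁻¹
      rw [hrow, Matrix.zero_vecMul, Matrix.mul_nonsing_inv A hdet, Matrix.vecMul_one] at h1
      exact h1.symm
    funext k
    have h := congrFun hu0 k
    simp only [Pi.zero_apply] at h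
    rcases mul_eq_zero.1 h with h' | h'
    · exact absurd h' (HPAux.eps_ne n k)
    · linarith [sub_eq_zero.1 h']
  · -- surjectivity
    intro M _hM hq he
    rw [HPAux.mulVec_eLast] at he
    have hz : ∀ i : Fin n, M i.castSucc (Fin.last n) = 0 := by
      intro i
      rcases he with h | h <;>
      · have h' := congrFun h i.castSucc
        simpa [eLast, Pi.single_apply, (Fin.castSucc_lt_last i).ne] using h'
    have hd : M (Fin.last n) (Fin.last n) = 1 ∨ M (Fin.last n) (Fin.last n) = -1 := by
      rcases he with h | h
      · left
        have h' := congrFun h (Fin.last n)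
        simpa [eLast] using h'
      · right
        have h' := congrFun h (Fin.last n)
        simpa [eLast] using h'
    set d := M (Fin.last n) (Fin.last n) with hdef
    have hd2 : d * d = 1 := by rcases hd with h | h <;> rw [h] <;> norm_num
    have hdne : d ≠ 0 := by rcases hd with h | h <;> rw [h] <;> norm_num
    set Ah : Matrix (Fin n) (Fin n) ℝ := Matrix.of fun i j => M i.castSucc j.castSucc with hAh
    have hMv : ∀ (xh : Fin n → ℝ) (i : Fin n),
        M.mulVec (Fin.snoc xh 0) i.castSucc = Ah.mulVec xh i := by
      intro xh i
      simp only [Matrix.mulVec, dotProduct]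
      rw [Fin.sum_univ_castSucc]
      simp [Fin.snoc_castSucc, Fin.snoc_last, hAh]
    have hAhq : InMinkO n Ah := by
      apply HPAux.inMinkO_of_quad
      intro xh
      have h := hq (Fin.snoc xh 0)
      rw [HPAux.q0_eq, HPAux.q0_eq] at h
      have e1 : (fun i : Fin n => M.mulVec (Fin.snoc xh 0) i.castSucc) = Ah.mulVec xh :=
        funext fun i => hMv xh i
      have e2 : (fun i : Fin n => (Fin.snoc xh 0 : Fin (n+1) → ℝ) i.castSucc) = xh :=
        funext fun i => Fin.snoc_castSucc _ _ _
      rw [e1, e2] at h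
      exact h
    set A : Matrix (Fin n) (Fin n) ℝ := d • Ah with hA
    have hAq : InMinkO n A := by
      intro x y
      rw [hA, Matrix.smul_mulVec, Matrix.smul_mulVec, HPAux.mink_smul_smul, hd2,
        one_mul]
      exact hAhq x y
    have hdet : IsUnit A.det := isUnit_iff_ne_zero.2 (HPAux.det_ne n A hAq)
    set b : Fin n → ℝ := fun j => M (Fin.last n) j.castSucc with hb
    set u : Fin n → ℝ := Matrix.vecMul (d • b) A⁻¹ with hu
    set v : Fin n → ℝ := fun k => HPAux.eps n k * u k with hv
    have hkey : Matrix.vecMul u A = d • b := by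
      rw [hu, Matrix.vecMul_vecMul, Matrix.nonsing_inv_mul A hdet, Matrix.vecMul_one]
    refine ⟨A, v, d, hdne, hAq, ?_⟩
    ext i j
    rw [Matrix.smul_apply, smul_eq_mul]
    induction i using Fin.lastCases with
    | last =>
      induction j using Fin.lastCases with
      | last => rw [HPAux.phi_ll, mul_one]
      | cast j =>
        rw [HPAux.phi_lc]
        have esum : ∑ k : Fin n, HPAux.eps n k * v k * A k j = Matrix.vecMul u A j := by
          simp only [Matrix.vecMul, dotProduct]
          refine Finset.sum_congr rfl fun k _ => ?_
          simp only [hv]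
          rw [← mul_assoc, HPAux.eps_sq, one_mul]
        rw [esum, hkey, Pi.smul_apply, smul_eq_mul, ← mul_assoc, hd2, one_mul]
    | cast i =>
      induction j using Fin.lastCases with
      | last =>
        rw [HPAux.phi_cl, mul_zero]
        exact hz i
      | cast j =>
        rw [HPAux.phi_cc, hA, Matrix.smul_apply, smul_eq_mul, ← mul_assoc, hd2, one_mul]
        rfl
end
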